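/- Let X_1,…,X_n be independent real random variables, g_i Borel functions with E g_i(X_i) = 0 and Σ_{i=1}^n E g_i(X_i)^2 = 1, W = Σ g_i(X_i), T = W + Δ for a random variable Δ = Δ(X_1,…,X_n), and for each i let Δ_i be a random variable such that X_i is independent of (Δ_i, W − g_i(X_i)). Let δ > 0 satisfy Σ_{i=1}^n E[ |g_i(X_i)| min(δ, |g_i(X_i)|) ] ≥ 1/2. Then sup_z |P(T ≤ z) − P(W ≤ z)| ≤ 4δ + E|WΔ| + Σ_{i=1}^n E|g_i(X_i)(Δ − Δ_i)|. -/

import Mathlib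

open MeasureTheory ProbabilityTheory Filter

noncomputable section

/-- clip `w` into `[p,q]` (when `p ≤ q`; equals `q` if `q < p`). -/
def clipR (p q w : ℝ) : ℝ := min (max w p) q

lemma clipR_mono (p q : ℝ) {u v : ℝ} (h : u ≤ v) : clipR p q u ≤ clipR p q v :=
  min_le_min (max_le_max h le_rfl) le_rfl

lemma max_sub_max_le_abs (x y c : ℝ) : max x c - max y c ≤ |x - y| := by
  have hx : x ≤ y + |x - y| := by nlinarith [le_abs_self (x - y)]
  have h1 : max x c ≤ max (y + |x - y|) c := max_le_max hx le_rfl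
  have h2 : max (y + |x - y|) c ≤ max y c + |x - y| := by
    apply max_le
    · have := le_max_left y c; linarith
    · have := le_max_right y c; have := abs_nonneg (x - y); linarith
  linarith

lemma min_sub_min_le_abs (x y c : ℝ) : min x c - min y c ≤ |x - y| := by
  have hx : x ≤ y + |x - y| := by nlinarith [le_abs_self (x - y)]
  have h1 : min x c ≤ min (y + |x - y|) c := min_le_min hx le_rfl
  have h2 : min (y + |x - y|) c ≤ min y c + |x - y| := by
    rcases le_total y c with h | h
    · have : min (y + |x - y|) c ≤ y + |x-y| := min_le_left _ _
      rw [min_eq_left h]; linarith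
    · rw [min_eq_right h]
      have : min (y + |x - y|) c ≤ c := min_le_right _ _
      have := abs_nonneg (x - y); linarith
  linarith

lemma clipR_lip (p q u v : ℝ) : |clipR p q u - clipR p q v| ≤ |u - v| := by
  unfold clipR
  rw [abs_sub_le_iff]
  constructor
  · calc min (max u p) q - min (max v p) q ≤ |max u p - max v p| := min_sub_min_le_abs _ _ _
      _ ≤ |u - v| := by
          rw [abs_sub_le_iff]; exact ⟨max_sub_max_le_abs _ _ _, by
            have := max_sub_max_le_abs v u p; rwa [abs_sub_comm] at this⟩
  · calc min (max v p) q - min (max u p) q ≤ |max v p - max u p| := min_sub_min_le_abs _ _ _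
      _ ≤ |v - u| := by
          rw [abs_sub_le_iff]; exact ⟨max_sub_max_le_abs _ _ _, by
            have := max_sub_max_le_abs u v p; rwa [abs_sub_comm] at this⟩
      _ = |u - v| := abs_sub_comm _ _

/-- centered clip -/
def cenR (p q w : ℝ) : ℝ := clipR p q w - (p + q) / 2

lemma cenR_abs_le (p q w : ℝ) : |cenR p q w| ≤ |q - p| / 2 := by
  unfold cenR clipR
  rcases le_total p q with h | h
  · have h1 : p ≤ min (max w p) q := le_min (le_trans (le_max_right w p) le_rfl) h
    have h2 : min (max w p) q ≤ q := min_le_right _ _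
    rw [abs_of_nonneg (by linarith : (0:ℝ) ≤ q - p)]
    rw [abs_le]; constructor <;> linarith
  · have h1 : min (max w p) q = q := min_eq_right (le_trans h (le_max_right w p))
    rw [h1, abs_of_nonpos (by linarith : q - p ≤ 0)]
    rw [abs_le]; constructor <;> linarith

lemma cenR_perturb_q (p q q' w : ℝ) : |cenR p q w - cenR p q' w| ≤ |q - q'| / 2 := by
  unfold cenR clipR
  set y := max w p with hy
  have key : ∀ s t : ℝ, t ≤ s → min y s - min y t ≤ s - t ∧ 0 ≤ min y s - min y t := by
    intro s t hts
    constructor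
    · rcases le_total y t with h | h
      · rw [min_eq_left h, min_eq_left (le_trans h hts)]; linarith
      · rw [min_eq_right h]
        have : min y s ≤ s := min_le_right _ _; linarith
    · have := min_le_min (le_refl y) hts; linarith
  rcases le_total q' q with h | h
  · obtain ⟨h1, h2⟩ := key q q' h
    rw [abs_of_nonneg (by linarith : (0:ℝ) ≤ q - q')]
    rw [abs_le]; constructor <;> linarith
  · obtain ⟨h1, h2⟩ := key q' q h
    rw [abs_of_nonpos (by linarith : q - q' ≤ 0)]
    rw [abs_le]; constructor <;> linarith

lemma cenR_perturb_p (p p' q w : ℝ) : |cenR p q w - cenR p' q w| ≤ |p - p'| / 2 := by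
  unfold cenR clipR
  have key : ∀ s t : ℝ, t ≤ s → min (max w s) q - min (max w t) q ≤ s - t ∧
      0 ≤ min (max w s) q - min (max w t) q := by
    intro s t hts
    constructor
    · have h1 : max w s - max w t ≤ s - t := by
        rcases le_total w t with h | h
        · rw [max_eq_right (le_trans h hts), max_eq_right h]
        · rw [max_eq_left h]
          have hms : max w s ≤ w + (s - t) := max_le (by linarith) (by linarith)
          linarith
      calc min (max w s) q - min (max w t) q ≤ |max w s - max w t| := min_sub_min_le_abs _ _ _
        _ ≤ s - t := by
            rw [abs_le]; constructor
            · have := max_le_max (le_refl w) hts; linarith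
            · exact h1
    · have := min_le_min (max_le_max (le_refl w) hts) (le_refl q); linarith
  rcases le_total p' p with h | h
  · obtain ⟨h1, h2⟩ := key p p' h
    rw [abs_of_nonneg (by linarith : (0:ℝ) ≤ p - p')]
    rw [abs_le]; constructor <;> linarith
  · obtain ⟨h1, h2⟩ := key p' p h
    rw [abs_of_nonpos (by linarith : p - p' ≤ 0)]
    rw [abs_le]; constructor <;> linarith

lemma clipR_sym_eq {M d : ℝ} (h : |d| ≤ M) : clipR (-M) M d = d := by
  obtain ⟨h1, h2⟩ := abs_le.mp h
  unfold clipR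
  rw [max_eq_left h1, min_eq_left h2]

lemma clipR_sym_abs_le_self {M d : ℝ} (hM : 0 ≤ M) : |clipR (-M) M d| ≤ |d| := by
  unfold clipR
  rcases le_total d (-M) with h | h
  · rw [max_eq_right h, min_eq_left (by linarith)]
    rw [abs_of_nonpos (by linarith), abs_of_nonpos (by linarith)]
    linarith
  · rw [max_eq_left h]
    rcases le_total d M with h2 | h2
    · rw [min_eq_left h2]
    · rw [min_eq_right h2, abs_of_nonneg hM, abs_of_nonneg (by linarith)]
      linarith

lemma clipR_sym_abs_le {M d : ℝ} (hM : 0 ≤ M) : |clipR (-M) M d| ≤ M := by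
  unfold clipR
  rcases le_total d (-M) with h | h
  · rw [max_eq_right h, min_eq_left (by linarith), abs_of_nonpos (by linarith)]
    linarith
  · rw [max_eq_left h]
    rcases le_total d M with h2 | h2
    · rw [min_eq_left h2, abs_le]; constructor <;> linarith
    · rw [min_eq_right h2, abs_of_nonneg hM]

lemma cenR_sub (p q u v : ℝ) : cenR p q u - cenR p q v = clipR p q u - clipR p q v := by
  unfold cenR; ring

lemma clipR_nonneg_incr (p q u x : ℝ) : 0 ≤ x * (clipR p q u - clipR p q (u - x)) := by
  rcases le_total 0 x with hx | hx
  · exact mul_nonneg hx (sub_nonneg.mpr (clipR_mono p q (by linarith)))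
  · have h2 : clipR p q u - clipR p q (u - x) ≤ 0 :=
      sub_nonpos.mpr (clipR_mono p q (show u ≤ u - x by linarith))
    nlinarith [mul_nonneg (neg_nonneg.mpr hx) (neg_nonneg.mpr h2)]

lemma clipR_capture {δ a b u : ℝ} (hδ : 0 < δ) (hau : a ≤ u) (hub : u ≤ b) (x : ℝ) :
    |x| * min δ |x| ≤ x * (clipR (a - δ) (b + δ) u - clipR (a - δ) (b + δ) (u - x)) := by
  have e1 : clipR (a - δ) (b + δ) u = u := by
    unfold clipR
    rw [max_eq_left (by linarith), min_eq_left (by linarith)]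
  rcases le_total 0 x with hx | hx
  · have e2 : clipR (a - δ) (b + δ) (u - x) ≤ u - min δ x := by
      unfold clipR
      refine le_trans (min_le_left _ _) (max_le ?_ ?_)
      · have := min_le_right δ x; linarith
      · have := min_le_left δ x; linarith
    rw [e1, abs_of_nonneg hx]
    have hmin : min δ x ≤ u - clipR (a - δ) (b + δ) (u - x) := by linarith
    calc x * min δ x ≤ x * (u - clipR (a - δ) (b + δ) (u - x)) :=
          mul_le_mul_of_nonneg_left hmin hx
      _ = _ := by ring
  · have e2 : u + min δ (-x) ≤ clipR (a - δ) (b + δ) (u - x) := by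
      unfold clipR
      refine le_min (le_trans ?_ (le_max_left _ _)) ?_
      · have := min_le_right δ (-x); linarith
      · have := min_le_left δ (-x); linarith
    rw [e1, abs_of_nonpos hx]
    have hmin : min δ (-x) ≤ clipR (a - δ) (b + δ) (u - x) - u := by linarith
    have hnn : 0 ≤ -x := by linarith
    calc (-x) * min δ (-x) ≤ (-x) * (clipR (a - δ) (b + δ) (u - x) - u) :=
          mul_le_mul_of_nonneg_left hmin hnn
      _ = x * (u - clipR (a - δ) (b + δ) (u - x)) := by ring

lemma measurable_clipR {α : Type*} [MeasurableSpace α] {p q w : α → ℝ}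
    (hp : Measurable p) (hq : Measurable q) (hw : Measurable w) :
    Measurable (fun ω => clipR (p ω) (q ω) (w ω)) :=
  (hw.max hp).min hq

lemma measurable_cenR {α : Type*} [MeasurableSpace α] {p q w : α → ℝ}
    (hp : Measurable p) (hq : Measurable q) (hw : Measurable w) :
    Measurable (fun ω => cenR (p ω) (q ω) (w ω)) :=
  ((hw.max hp).min hq).sub ((hp.add hq).div_const 2)

/-- second moment of a sum of pairwise independent, mean-zero variables -/
lemma sum_sq_eq {Ω : Type*} [MeasurableSpace Ω] (μ : Measure Ω) [IsProbabilityMeasure μ]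
    {n : ℕ} (ζ : Fin n → Ω → ℝ)
    (hint : ∀ i, Integrable (ζ i) μ) (hint2 : ∀ i, Integrable (fun ω => ζ i ω * ζ i ω) μ)
    (hind : ∀ i j, i ≠ j → IndepFun (ζ i) (ζ j) μ) (hmean : ∀ i, ∫ ω, ζ i ω ∂μ = 0) :
    ∫ ω, (∑ i, ζ i ω) * (∑ i, ζ i ω) ∂μ = ∑ i, ∫ ω, ζ i ω * ζ i ω ∂μ := by
  have hprod : ∀ i j : Fin n, Integrable (fun ω => ζ i ω * ζ j ω) μ := by
    intro i j
    by_cases h : i = j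
    · subst h; exact hint2 i
    · exact (hind i j h).integrable_mul (hint i) (hint j)
  have step1 : ∫ ω, (∑ i, ζ i ω) * (∑ i, ζ i ω) ∂μ
      = ∑ i, ∑ j, ∫ ω, ζ i ω * ζ j ω ∂μ := by
    rw [show (fun ω => (∑ i, ζ i ω) * (∑ i, ζ i ω)) = fun ω => ∑ i, ∑ j, ζ i ω * ζ j ω from
      funext fun ω => Finset.sum_mul_sum _ _ _ _]
    rw [integral_finset_sum _ (fun i _ => integrable_finset_sum _ (fun j _ => hprod i j))]
    exact Finset.sum_congr rfl fun i _ => integral_finset_sum _ (fun j _ => hprod i j)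
  rw [step1]
  refine Finset.sum_congr rfl fun i _ => ?_
  rw [Finset.sum_eq_single i]
  · intro j _ hji
    rw [show (fun ω => ζ i ω * ζ j ω) = (ζ i) * (ζ j) from rfl] at *
    rw [(hind i j (Ne.symm hji)).integral_mul_eq_mul_integral (hint i).aestronglyMeasurable
        (hint j).aestronglyMeasurable]
    rw [hmean j, mul_zero]
  · intro h; exact absurd (Finset.mem_univ i) h


set_option maxHeartbeats 2000000 in
lemma core_concentration {Ω : Type*} [MeasurableSpace Ω] (μ : Measure Ω)
    [IsProbabilityMeasure μ] (n : ℕ) (X : Fin n → Ω → ℝ) (g : Fin n → ℝ → ℝ)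
    (hmeasX : ∀ i, Measurable (X i)) (hmeasg : ∀ i, Measurable (g i))
    (hindep : iIndepFun X μ)
    (hint : ∀ i, Integrable (fun ω => g i (X i ω)) μ)
    (hint2 : ∀ i, Integrable (fun ω => (g i (X i ω)) ^ 2) μ)
    (hmean : ∀ i, ∫ ω, g i (X i ω) ∂μ = 0)
    (hvar : ∑ i, ∫ ω, (g i (X i ω)) ^ 2 ∂μ = 1)
    (W : Ω → ℝ) (hW : ∀ ω, W ω = ∑ i, g i (X i ω))
    (δ : ℝ) (hδ : 0 < δ)
    (hcond : ∑ i, ∫ ω, |g i (X i ω)| * min δ |g i (X i ω)| ∂μ ≥ 1 / 2)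
    (a b : Ω → ℝ) (ha : Measurable a) (hb : Measurable b)
    (ai bi : Fin n → Ω → ℝ) (hai : ∀ i, Measurable (ai i)) (hbi : ∀ i, Measurable (bi i))
    (K : ℝ) (hKa : ∀ ω, |a ω| ≤ K) (hKb : ∀ ω, |b ω| ≤ K)
    (hKai : ∀ i ω, |ai i ω| ≤ K) (hKbi : ∀ i ω, |bi i ω| ≤ K)
    (hind2 : ∀ i, IndepFun (fun ω => g i (X i ω))
        (fun ω => (ai i ω, bi i ω, W ω - g i (X i ω))) μ) :
    (μ {ω | a ω ≤ W ω ∧ W ω ≤ b ω}).toReal ≤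
      3 * δ + ∫ ω, |W ω| * |b ω - a ω| ∂μ
        + ∑ i, ∫ ω, |g i (X i ω)| * (|a ω - ai i ω| + |b ω - bi i ω|) ∂μ := by
  -- basic measurability
  have hmeasξ : ∀ i, Measurable (fun ω => g i (X i ω)) := fun i => (hmeasg i).comp (hmeasX i)
  have hWeq : W = fun ω => ∑ i, g i (X i ω) := funext hW
  have hmeasW : Measurable W := by
    rw [hWeq]; exact Finset.measurable_sum _ (fun i _ => hmeasξ i)
  have hintW : Integrable W μ := by
    rw [hWeq]; exact integrable_finset_sum _ (fun i _ => hint i)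
  -- the event and its indicator
  set E : Set Ω := {ω | a ω ≤ W ω ∧ W ω ≤ b ω} with hEdef
  have hmeasE : MeasurableSet E := by
    have h : E = {ω | a ω ≤ W ω} ∩ {ω | W ω ≤ b ω} := rfl
    rw [h]
    exact (measurableSet_le ha hmeasW).inter (measurableSet_le hmeasW hb)
  set ind : Ω → ℝ := E.indicator 1 with hinddef
  have hmeasind : Measurable ind := measurable_one.indicator hmeasE
  have hind01 : ∀ ω, ind ω = 1 ∨ ind ω = 0 := by
    intro ω; by_cases h : ω ∈ E
    · left; simp [hinddef, Set.indicator_of_mem h]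
    · right; simp [hinddef, Set.indicator_of_notMem h]
  have hindnn : ∀ ω, 0 ≤ ind ω := fun ω => by rcases hind01 ω with h | h <;> simp [h]
  have hindle : ∀ ω, ind ω ≤ 1 := fun ω => by rcases hind01 ω with h | h <;> simp [h]
  -- the weights η and their sum Bh
  set η : Fin n → Ω → ℝ := fun i ω => |g i (X i ω)| * min δ |g i (X i ω)| with hηdef
  have hmeasη : ∀ i, Measurable (η i) := fun i =>
    (hmeasξ i).abs.mul (measurable_const.min (hmeasξ i).abs)
  have hηnn : ∀ i ω, 0 ≤ η i ω := fun i ω =>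
    mul_nonneg (abs_nonneg _) (le_min hδ.le (abs_nonneg _))
  have hηle : ∀ i ω, η i ω ≤ δ * |g i (X i ω)| := by
    intro i ω
    have h1 : min δ |g i (X i ω)| ≤ δ := min_le_left _ _
    have h2 := abs_nonneg (g i (X i ω))
    have : η i ω = |g i (X i ω)| * min δ |g i (X i ω)| := rfl
    nlinarith
  have hintη : ∀ i, Integrable (η i) μ := by
    intro i
    refine Integrable.mono' (((hint i).abs).const_mul δ) (hmeasη i).aestronglyMeasurable ?_
    filter_upwards with ω
    rw [Real.norm_eq_abs, abs_of_nonneg (hηnn i ω)]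
    exact hηle i ω
  set Bh : Ω → ℝ := fun ω => ∑ i, η i ω with hBhdef
  have hmeasBh : Measurable Bh := Finset.measurable_sum _ (fun i _ => hmeasη i)
  have hintBh : Integrable Bh μ := integrable_finset_sum _ (fun i _ => hintη i)
  have hBhnn : ∀ ω, 0 ≤ Bh ω := fun ω => Finset.sum_nonneg fun i _ => hηnn i ω
  set βc : ℝ := ∑ i, ∫ ω, η i ω ∂μ with hβcdef
  have hβc : ∫ ω, Bh ω ∂μ = βc := integral_finset_sum _ (fun i _ => hintη i)
  have hβchalf : 1 / 2 ≤ βc := hcond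
  -- the random clip functions
  set f : Ω → ℝ → ℝ := fun ω w => cenR (a ω - δ) (b ω + δ) w with hfdef
  set fi : Fin n → Ω → ℝ → ℝ := fun i ω w => cenR (ai i ω - δ) (bi i ω + δ) w with hfidef
  have hfbd : ∀ ω w, |f ω w| ≤ K + δ := by
    intro ω w
    have h1 := abs_le.mp (hKa ω); have h2 := abs_le.mp (hKb ω)
    calc |f ω w| ≤ |(b ω + δ) - (a ω - δ)| / 2 := cenR_abs_le _ _ _
      _ ≤ (2 * K + 2 * δ) / 2 := by
          have h3 : |(b ω + δ) - (a ω - δ)| ≤ 2 * K + 2 * δ :=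
            abs_le.mpr ⟨by linarith, by linarith⟩
          linarith
      _ = K + δ := by ring
  have hfibd : ∀ i ω w, |fi i ω w| ≤ K + δ := by
    intro i ω w
    have h1 := abs_le.mp (hKai i ω); have h2 := abs_le.mp (hKbi i ω)
    calc |fi i ω w| ≤ |(bi i ω + δ) - (ai i ω - δ)| / 2 := cenR_abs_le _ _ _
      _ ≤ (2 * K + 2 * δ) / 2 := by
          have h3 : |(bi i ω + δ) - (ai i ω - δ)| ≤ 2 * K + 2 * δ :=
            abs_le.mpr ⟨by linarith, by linarith⟩
          linarith
      _ = K + δ := by ring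
  have hflip : ∀ ω u v, |f ω u - f ω v| ≤ |u - v| := by
    intro ω u v
    rw [show f ω u - f ω v = clipR (a ω - δ) (b ω + δ) u - clipR (a ω - δ) (b ω + δ) v from
      cenR_sub _ _ _ _]
    exact clipR_lip _ _ _ _
  have hmeasfW : Measurable (fun ω => f ω (W ω)) :=
    measurable_cenR (ha.sub measurable_const) (hb.add measurable_const) hmeasW
  have hmeasWi : ∀ i, Measurable (fun ω => W ω - g i (X i ω)) :=
    fun i => hmeasW.sub (hmeasξ i)
  have hmeasfWi : ∀ i, Measurable (fun ω => f ω (W ω - g i (X i ω))) := fun i =>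
    measurable_cenR (ha.sub measurable_const) (hb.add measurable_const) (hmeasWi i)
  have hmeasfiWi : ∀ i, Measurable (fun ω => fi i ω (W ω - g i (X i ω))) := fun i =>
    measurable_cenR ((hai i).sub measurable_const) ((hbi i).add measurable_const) (hmeasWi i)
  -- integrability of products with the bounded clip functions
  have hprodint : ∀ i (F : Ω → ℝ), Measurable F → (∀ ω, |F ω| ≤ K + δ) →
      Integrable (fun ω => g i (X i ω) * F ω) μ := by
    intro i F hF hFbd
    refine Integrable.mono' (((hint i).abs).const_mul (K + δ))
      ((hmeasξ i).mul hF).aestronglyMeasurable ?_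
    filter_upwards with ω
    rw [Real.norm_eq_abs, abs_mul]
    calc |g i (X i ω)| * |F ω| ≤ |g i (X i ω)| * (K + δ) :=
          mul_le_mul_of_nonneg_left (hFbd ω) (abs_nonneg _)
      _ = (K + δ) * |g i (X i ω)| := by ring
  have hintfW : ∀ i, Integrable (fun ω => g i (X i ω) * f ω (W ω)) μ := fun i =>
    hprodint i _ hmeasfW (fun ω => hfbd ω _)
  have hintfWi : ∀ i, Integrable (fun ω => g i (X i ω) * f ω (W ω - g i (X i ω))) μ := fun i =>
    hprodint i _ (hmeasfWi i) (fun ω => hfbd ω _)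
  have hintfiWi : ∀ i, Integrable (fun ω => g i (X i ω) * fi i ω (W ω - g i (X i ω))) μ :=
    fun i => hprodint i _ (hmeasfiWi i) (fun ω => hfibd i ω _)
  -- pointwise capture inequality
  have hcap : ∀ i ω, η i ω * ind ω ≤
      g i (X i ω) * (f ω (W ω) - f ω (W ω - g i (X i ω))) := by
    intro i ω
    have hsub : f ω (W ω) - f ω (W ω - g i (X i ω))
        = clipR (a ω - δ) (b ω + δ) (W ω) - clipR (a ω - δ) (b ω + δ) (W ω - g i (X i ω)) :=
      cenR_sub _ _ _ _
    by_cases h : ω ∈ E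
    · have h1 : ind ω = 1 := by simp [hinddef, Set.indicator_of_mem h]
      rw [h1, mul_one, hsub]
      exact clipR_capture hδ h.1 h.2 _
    · have h0 : ind ω = 0 := by simp [hinddef, Set.indicator_of_notMem h]
      rw [h0, mul_zero, hsub]
      exact clipR_nonneg_incr _ _ _ _
  have hintcap : ∀ i, Integrable
      (fun ω => g i (X i ω) * (f ω (W ω) - f ω (W ω - g i (X i ω)))) μ := by
    intro i
    refine Integrable.mono' (hint2 i)
      ((hmeasξ i).mul (hmeasfW.sub (hmeasfWi i))).aestronglyMeasurable ?_
    filter_upwards with ω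
    rw [Real.norm_eq_abs, abs_mul]
    have hl : |f ω (W ω) - f ω (W ω - g i (X i ω))| ≤ |g i (X i ω)| := by
      have h := hflip ω (W ω) (W ω - g i (X i ω))
      simpa using h
    calc |g i (X i ω)| * |f ω (W ω) - f ω (W ω - g i (X i ω))|
        ≤ |g i (X i ω)| * |g i (X i ω)| := mul_le_mul_of_nonneg_left hl (abs_nonneg _)
      _ = (g i (X i ω)) ^ 2 := by rw [abs_mul_abs_self, sq]
  have hintηind : ∀ i, Integrable (fun ω => η i ω * ind ω) μ := by
    intro i
    refine Integrable.mono' (hintη i)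
      ((hmeasη i).mul hmeasind).aestronglyMeasurable ?_
    filter_upwards with ω
    rw [Real.norm_eq_abs, abs_of_nonneg (mul_nonneg (hηnn i ω) (hindnn ω))]
    exact mul_le_of_le_one_right (hηnn i ω) (hindle ω)
  -- Step C : capture under the integral
  have hC : ∫ ω, Bh ω * ind ω ∂μ ≤
      ∑ i, ∫ ω, g i (X i ω) * (f ω (W ω) - f ω (W ω - g i (X i ω))) ∂μ := by
    have h1 : (fun ω => Bh ω * ind ω) = fun ω => ∑ i, η i ω * ind ω := by
      funext ω; exact Finset.sum_mul _ _ _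
    rw [h1, integral_finset_sum _ (fun i _ => hintηind i)]
    exact Finset.sum_le_sum fun i _ =>
      integral_mono (hintηind i) (hintcap i) (fun ω => hcap i ω)
  have hBhind : Integrable (fun ω => Bh ω * ind ω) μ := by
    have h1 : (fun ω => Bh ω * ind ω) = fun ω => ∑ i, η i ω * ind ω := by
      funext ω; exact Finset.sum_mul _ _ _
    rw [h1]; exact integrable_finset_sum _ (fun i _ => hintηind i)
  -- Step D : Stein identity pieces
  have hsum1 : ∑ i, ∫ ω, g i (X i ω) * (f ω (W ω) - f ω (W ω - g i (X i ω))) ∂μ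
      = ∫ ω, W ω * f ω (W ω) ∂μ
        - ∑ i, ∫ ω, g i (X i ω) * f ω (W ω - g i (X i ω)) ∂μ := by
    have h1 : ∀ i : Fin n, ∫ ω, g i (X i ω) * (f ω (W ω) - f ω (W ω - g i (X i ω))) ∂μ
        = ∫ ω, g i (X i ω) * f ω (W ω) ∂μ
          - ∫ ω, g i (X i ω) * f ω (W ω - g i (X i ω)) ∂μ := by
      intro i
      rw [show (fun ω => g i (X i ω) * (f ω (W ω) - f ω (W ω - g i (X i ω))))
          = fun ω => g i (X i ω) * f ω (W ω) - g i (X i ω) * f ω (W ω - g i (X i ω)) from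
        funext fun ω => by ring]
      exact integral_sub (hintfW i) (hintfWi i)
    rw [Finset.sum_congr rfl (fun i _ => h1 i), Finset.sum_sub_distrib]
    congr 1
    rw [← integral_finset_sum _ (fun i _ => hintfW i)]
    congr 1; funext ω
    rw [← Finset.sum_mul, ← hW ω]
  -- D0 : independence kills the leave-one-out term
  have hD0 : ∀ i, ∫ ω, g i (X i ω) * fi i ω (W ω - g i (X i ω)) ∂μ = 0 := by
    intro i
    have hφ : Measurable (fun p : ℝ × ℝ × ℝ => cenR (p.1 - δ) (p.2.1 + δ) p.2.2) :=
      measurable_cenR (measurable_fst.sub measurable_const)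
        ((measurable_fst.comp measurable_snd).add measurable_const)
        (measurable_snd.comp measurable_snd)
    have hI : IndepFun (fun ω => g i (X i ω))
        (fun ω => fi i ω (W ω - g i (X i ω))) μ := by
      have h := (hind2 i).comp measurable_id hφ
      exact h
    have h2 := hI.integral_mul_eq_mul_integral (hint i).aestronglyMeasurable
      (hmeasfiWi i).aestronglyMeasurable
    have h3 : (fun ω => g i (X i ω) * fi i ω (W ω - g i (X i ω)))
        = (fun ω => g i (X i ω)) * (fun ω => fi i ω (W ω - g i (X i ω))) := rfl
    rw [show (∫ ω, g i (X i ω) * fi i ω (W ω - g i (X i ω)) ∂μ)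
        = ∫ ω, ((fun ω => g i (X i ω)) * (fun ω => fi i ω (W ω - g i (X i ω)))) ω ∂μ from rfl]
    rw [h2, hmean i, zero_mul]
  -- perturbation bound between f and fi
  have hper : ∀ i ω w, |f ω w - fi i ω w| ≤ (|a ω - ai i ω| + |b ω - bi i ω|) / 2 := by
    intro i ω w
    have h1 : |f ω w - cenR (a ω - δ) (bi i ω + δ) w| ≤ |b ω - bi i ω| / 2 := by
      have := cenR_perturb_q (a ω - δ) (b ω + δ) (bi i ω + δ) w
      rwa [show (b ω + δ) - (bi i ω + δ) = b ω - bi i ω from by ring] at this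
    have h2 : |cenR (a ω - δ) (bi i ω + δ) w - fi i ω w| ≤ |a ω - ai i ω| / 2 := by
      have := cenR_perturb_p (a ω - δ) (ai i ω - δ) (bi i ω + δ) w
      rwa [show (a ω - δ) - (ai i ω - δ) = a ω - ai i ω from by ring] at this
    calc |f ω w - fi i ω w|
        ≤ |f ω w - cenR (a ω - δ) (bi i ω + δ) w|
          + |cenR (a ω - δ) (bi i ω + δ) w - fi i ω w| := abs_sub_le _ _ _
      _ ≤ (|a ω - ai i ω| + |b ω - bi i ω|) / 2 := by linarith
  -- replacement cost bound
  have hrepl : ∀ i, -((∫ ω, |g i (X i ω)| * (|a ω - ai i ω| + |b ω - bi i ω|) ∂μ) / 2)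
      ≤ ∫ ω, g i (X i ω) * f ω (W ω - g i (X i ω)) ∂μ := by
    intro i
    have hintdiff : Integrable
        (fun ω => g i (X i ω) * (f ω (W ω - g i (X i ω)) - fi i ω (W ω - g i (X i ω)))) μ := by
      have h1 : (fun ω => g i (X i ω) * (f ω (W ω - g i (X i ω)) - fi i ω (W ω - g i (X i ω))))
          = fun ω => g i (X i ω) * f ω (W ω - g i (X i ω))
              - g i (X i ω) * fi i ω (W ω - g i (X i ω)) := funext fun ω => by ring
      rw [h1]; exact (hintfWi i).sub (hintfiWi i)
    have hintper : Integrable (fun ω => |g i (X i ω)| * (|a ω - ai i ω| + |b ω - bi i ω|)) μ := by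
      refine Integrable.mono' (((hint i).abs).const_mul (4 * K))
        ((hmeasξ i).abs.mul (((ha.sub (hai i)).abs).add ((hb.sub (hbi i)).abs))).aestronglyMeasurable ?_
      filter_upwards with ω
      have ha1 := abs_le.mp (hKa ω); have ha2 := abs_le.mp (hKai i ω)
      have hb1 := abs_le.mp (hKb ω); have hb2 := abs_le.mp (hKbi i ω)
      have h4 : |a ω - ai i ω| + |b ω - bi i ω| ≤ 4 * K := by
        have := abs_le.mpr (show -(2*K) ≤ a ω - ai i ω ∧ a ω - ai i ω ≤ 2*K from
          ⟨by linarith, by linarith⟩)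
        have := abs_le.mpr (show -(2*K) ≤ b ω - bi i ω ∧ b ω - bi i ω ≤ 2*K from
          ⟨by linarith, by linarith⟩)
        linarith
      rw [Real.norm_eq_abs, abs_of_nonneg (mul_nonneg (abs_nonneg _)
        (add_nonneg (abs_nonneg _) (abs_nonneg _)))]
      calc |g i (X i ω)| * (|a ω - ai i ω| + |b ω - bi i ω|)
          ≤ |g i (X i ω)| * (4 * K) := mul_le_mul_of_nonneg_left h4 (abs_nonneg _)
        _ = 4 * K * |g i (X i ω)| := by ring
    have hptw : ∀ ω, -(|g i (X i ω)| * (|a ω - ai i ω| + |b ω - bi i ω|) / 2)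
        ≤ g i (X i ω) * (f ω (W ω - g i (X i ω)) - fi i ω (W ω - g i (X i ω))) := by
      intro ω
      set d := f ω (W ω - g i (X i ω)) - fi i ω (W ω - g i (X i ω)) with hd
      have h1 : |g i (X i ω) * d| ≤ |g i (X i ω)| * ((|a ω - ai i ω| + |b ω - bi i ω|) / 2) := by
        rw [abs_mul]
        exact mul_le_mul_of_nonneg_left (hper i ω _) (abs_nonneg _)
      have h2 := neg_abs_le (g i (X i ω) * d)
      have h3 : |g i (X i ω)| * ((|a ω - ai i ω| + |b ω - bi i ω|) / 2)
          = |g i (X i ω)| * (|a ω - ai i ω| + |b ω - bi i ω|) / 2 := by ring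
      rw [h3] at h1
      exact le_trans (neg_le_neg h1) h2
    have hsplit : ∫ ω, g i (X i ω) * f ω (W ω - g i (X i ω)) ∂μ
        = ∫ ω, g i (X i ω) * (f ω (W ω - g i (X i ω)) - fi i ω (W ω - g i (X i ω))) ∂μ := by
      have h1 : (fun ω => g i (X i ω) * f ω (W ω - g i (X i ω)))
          = fun ω => g i (X i ω) * (f ω (W ω - g i (X i ω)) - fi i ω (W ω - g i (X i ω)))
              + g i (X i ω) * fi i ω (W ω - g i (X i ω)) := funext fun ω => by ring
      rw [h1, integral_add hintdiff (hintfiWi i), hD0 i, add_zero]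
    rw [hsplit]
    have h5 : ∫ ω, -(|g i (X i ω)| * (|a ω - ai i ω| + |b ω - bi i ω|) / 2) ∂μ
        = -((∫ ω, |g i (X i ω)| * (|a ω - ai i ω| + |b ω - bi i ω|) ∂μ) / 2) := by
      rw [integral_neg]
      congr 1
      exact integral_div _ _
    rw [← h5]
    exact integral_mono ((hintper.div_const 2).neg) hintdiff hptw
  -- integrability of |W| |b-a| and of W f(W)
  have hintWba : Integrable (fun ω => |W ω| * |b ω - a ω|) μ := by
    refine Integrable.mono' ((hintW.abs).const_mul (2 * K))
      (hmeasW.abs.mul ((hb.sub ha).abs)).aestronglyMeasurable ?_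
    filter_upwards with ω
    have h1 := abs_le.mp (hKa ω); have h2 := abs_le.mp (hKb ω)
    have h3 : |b ω - a ω| ≤ 2 * K := abs_le.mpr ⟨by linarith, by linarith⟩
    rw [Real.norm_eq_abs, abs_of_nonneg (mul_nonneg (abs_nonneg _) (abs_nonneg _))]
    calc |W ω| * |b ω - a ω| ≤ |W ω| * (2 * K) :=
          mul_le_mul_of_nonneg_left h3 (abs_nonneg _)
      _ = 2 * K * |W ω| := by ring
  have hintWfW : Integrable (fun ω => W ω * f ω (W ω)) μ := by
    refine Integrable.mono' ((hintW.abs).const_mul (K + δ))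
      (hmeasW.mul hmeasfW).aestronglyMeasurable ?_
    filter_upwards with ω
    rw [Real.norm_eq_abs, abs_mul]
    calc |W ω| * |f ω (W ω)| ≤ |W ω| * (K + δ) :=
          mul_le_mul_of_nonneg_left (hfbd ω _) (abs_nonneg _)
      _ = (K + δ) * |W ω| := by ring
  -- Step E : bound on ∫ W f(W)
  have hE1 : ∫ ω, W ω * f ω (W ω) ∂μ
      ≤ δ * ∫ ω, |W ω| ∂μ + (∫ ω, |W ω| * |b ω - a ω| ∂μ) / 2 := by
    have hpt : ∀ ω, W ω * f ω (W ω) ≤ δ * |W ω| + |W ω| * |b ω - a ω| / 2 := by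
      intro ω
      have h1 : |f ω (W ω)| ≤ δ + |b ω - a ω| / 2 := by
        have hc : |f ω (W ω)| ≤ |(b ω + δ) - (a ω - δ)| / 2 := cenR_abs_le _ _ _
        have h2 : |(b ω + δ) - (a ω - δ)| = |(b ω - a ω) + 2 * δ| := by ring_nf
        have h3 : |(b ω - a ω) + 2 * δ| ≤ |b ω - a ω| + 2 * δ := by
          have := abs_add_le (b ω - a ω) (2 * δ)
          have h4 : |2 * δ| = 2 * δ := abs_of_pos (by linarith)
          linarith
        rw [h2] at hc; linarith
      have h2 : W ω * f ω (W ω) ≤ |W ω| * |f ω (W ω)| := by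
        calc W ω * f ω (W ω) ≤ |W ω * f ω (W ω)| := le_abs_self _
          _ = |W ω| * |f ω (W ω)| := abs_mul _ _
      calc W ω * f ω (W ω) ≤ |W ω| * (δ + |b ω - a ω| / 2) :=
            le_trans h2 (mul_le_mul_of_nonneg_left h1 (abs_nonneg _))
        _ = δ * |W ω| + |W ω| * |b ω - a ω| / 2 := by ring
    have hintRHS : Integrable (fun ω => δ * |W ω| + |W ω| * |b ω - a ω| / 2) μ :=
      ((hintW.abs).const_mul δ).add (hintWba.div_const 2)
    calc ∫ ω, W ω * f ω (W ω) ∂μ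
        ≤ ∫ ω, (δ * |W ω| + |W ω| * |b ω - a ω| / 2) ∂μ :=
          integral_mono hintWfW hintRHS hpt
      _ = δ * ∫ ω, |W ω| ∂μ + (∫ ω, |W ω| * |b ω - a ω| ∂μ) / 2 := by
          rw [integral_add ((hintW.abs).const_mul δ) (hintWba.div_const 2),
            integral_const_mul]
          congr 1
          exact integral_div 2 (fun ω => |W ω| * |b ω - a ω|)
  -- second moment of W and E|W| ≤ 1
  have hpairind : ∀ i j : Fin n, i ≠ j →
      IndepFun (fun ω => g i (X i ω)) (fun ω => g j (X j ω)) μ := by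
    intro i j h
    have := (hindep.indepFun h).comp (hmeasg i) (hmeasg j)
    exact this
  have hint2' : ∀ i, Integrable (fun ω => g i (X i ω) * g i (X i ω)) μ := by
    intro i
    have := hint2 i
    simpa [sq] using this
  have hWW1 : ∫ ω, W ω * W ω ∂μ = 1 := by
    have h1 : (fun ω => W ω * W ω)
        = fun ω => (∑ i, g i (X i ω)) * (∑ i, g i (X i ω)) := by
      funext ω; rw [hW ω]
    rw [show (∫ ω, W ω * W ω ∂μ)
        = ∫ ω, (∑ i, g i (X i ω)) * (∑ i, g i (X i ω)) ∂μ from by rw [← h1]]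
    rw [sum_sq_eq μ (fun i ω => g i (X i ω)) hint hint2' hpairind hmean]
    rw [← hvar]
    exact Finset.sum_congr rfl fun i _ => by
      congr 1; funext ω; rw [sq]
  have hintWW : Integrable (fun ω => W ω * W ω) μ := by
    have h1 : (fun ω => W ω * W ω)
        = fun ω => ∑ i, ∑ j, g i (X i ω) * g j (X j ω) := by
      funext ω; rw [hW ω]; exact Finset.sum_mul_sum _ _ _ _
    rw [h1]
    refine integrable_finset_sum _ fun i _ => integrable_finset_sum _ fun j _ => ?_
    by_cases h : i = j
    · subst h; exact hint2' i
    · exact (hpairind i j h).integrable_mul (hint i) (hint j)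
  have habsW : ∫ ω, |W ω| ∂μ ≤ 1 := by
    have hpt : ∀ ω, |W ω| ≤ (W ω * W ω + 1) / 2 := by
      intro ω
      nlinarith [abs_mul_abs_self (W ω), sq_nonneg (|W ω| - 1), abs_nonneg (W ω)]
    calc ∫ ω, |W ω| ∂μ ≤ ∫ ω, (W ω * W ω + 1) / 2 ∂μ :=
          integral_mono hintW.abs ((hintWW.add (integrable_const 1)).div_const 2) hpt
      _ = (∫ ω, (W ω * W ω + 1) ∂μ) / 2 := integral_div _ _
      _ = (∫ ω, W ω * W ω ∂μ + 1) / 2 := by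
          rw [integral_add hintWW (integrable_const 1), integral_const]
          simp
      _ = 1 := by rw [hWW1]; norm_num
  -- variance bound for Bh
  set γ : Fin n → ℝ := fun i => ∫ ω, η i ω ∂μ with hγdef
  have hintη2 : ∀ i, Integrable (fun ω => η i ω * η i ω) μ := by
    intro i
    refine Integrable.mono' ((hint2' i).const_mul (δ * δ))
      ((hmeasη i).mul (hmeasη i)).aestronglyMeasurable ?_
    filter_upwards with ω
    rw [Real.norm_eq_abs, abs_of_nonneg (mul_nonneg (hηnn i ω) (hηnn i ω))]
    have h1 := hηle i ω; have h2 := hηnn i ω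
    have h3 := abs_nonneg (g i (X i ω))
    have h4 : η i ω * η i ω ≤ (δ * |g i (X i ω)|) * (δ * |g i (X i ω)|) := by nlinarith
    have h5 : (δ * |g i (X i ω)|) * (δ * |g i (X i ω)|)
        = δ * δ * (g i (X i ω) * g i (X i ω)) := by
      rw [show (δ * |g i (X i ω)|) * (δ * |g i (X i ω)|)
          = δ * δ * (|g i (X i ω)| * |g i (X i ω)|) from by ring, abs_mul_abs_self]
    linarith [h4, h5.le]
  have hζint : ∀ i, Integrable (fun ω => η i ω - γ i) μ :=
    fun i => (hintη i).sub (integrable_const _)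
  have hζ2int : ∀ i, Integrable (fun ω => (η i ω - γ i) * (η i ω - γ i)) μ := by
    intro i
    have h1 : (fun ω => (η i ω - γ i) * (η i ω - γ i))
        = fun ω => η i ω * η i ω - (2 * γ i) * η i ω + γ i * γ i :=
      funext fun ω => by ring
    rw [h1]
    exact ((hintη2 i).sub ((hintη i).const_mul _)).add (integrable_const _)
  have hζind : ∀ i j, i ≠ j →
      IndepFun (fun ω => η i ω - γ i) (fun ω => η j ω - γ j) μ := by
    intro i j h
    have hφ : ∀ k : Fin n, Measurable (fun x : ℝ => |g k x| * min δ |g k x| - γ k) :=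
      fun k => (((hmeasg k).abs.mul (measurable_const.min (hmeasg k).abs)).sub
        measurable_const)
    have := (hindep.indepFun h).comp (hφ i) (hφ j)
    exact this
  have hζmean : ∀ i, ∫ ω, (η i ω - γ i) ∂μ = 0 := by
    intro i
    rw [integral_sub (hintη i) (integrable_const _), integral_const]
    simp [hγdef]
  have hvarB : ∫ ω, (Bh ω - βc) * (Bh ω - βc) ∂μ ≤ δ * δ := by
    have h1 : (fun ω => Bh ω - βc) = fun ω => ∑ i, (η i ω - γ i) := by
      funext ω
      rw [Finset.sum_sub_distrib]
    have h2 : ∫ ω, (Bh ω - βc) * (Bh ω - βc) ∂μ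
        = ∑ i, ∫ ω, (η i ω - γ i) * (η i ω - γ i) ∂μ := by
      have hpt : ∀ ω, (Bh ω - βc) * (Bh ω - βc)
          = (∑ i, (η i ω - γ i)) * (∑ i, (η i ω - γ i)) := by
        intro ω; rw [Finset.sum_sub_distrib]
      rw [show (fun ω => (Bh ω - βc) * (Bh ω - βc))
          = fun ω => (∑ i, (η i ω - γ i)) * (∑ i, (η i ω - γ i)) from funext hpt]
      exact sum_sq_eq μ _ hζint hζ2int hζind hζmean
    rw [h2]
    have h3 : ∀ i : Fin n, ∫ ω, (η i ω - γ i) * (η i ω - γ i) ∂μ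
        ≤ δ * δ * ∫ ω, (g i (X i ω)) ^ 2 ∂μ := by
      intro i
      have hγi : ∫ ω, η i ω ∂μ = γ i := rfl
      have h4 : ∫ ω, (η i ω - γ i) * (η i ω - γ i) ∂μ
          = ∫ ω, η i ω * η i ω ∂μ - γ i * γ i := by
        have hA : Integrable (fun ω => η i ω * η i ω - 2 * γ i * η i ω) μ :=
          (hintη2 i).sub ((hintη i).const_mul (2 * γ i))
        have h5 : (fun ω => (η i ω - γ i) * (η i ω - γ i))
            = fun ω => (η i ω * η i ω - 2 * γ i * η i ω) + γ i * γ i :=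
          funext fun ω => by ring
        rw [h5, integral_add hA (integrable_const _),
          integral_sub (hintη2 i) ((hintη i).const_mul (2 * γ i)),
          integral_const_mul, integral_const, hγi]
        simp
        ring
      have h6 : ∫ ω, η i ω * η i ω ∂μ ≤ δ * δ * ∫ ω, (g i (X i ω)) ^ 2 ∂μ := by
        rw [← integral_const_mul]
        refine integral_mono (hintη2 i) ((hint2 i).const_mul _) ?_
        intro ω
        have hle := hηle i ω; have hnn := hηnn i ω
        have h3 := abs_nonneg (g i (X i ω))
        have h7 : (g i (X i ω)) ^ 2 = |g i (X i ω)| * |g i (X i ω)| := by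
          rw [abs_mul_abs_self, sq]
        simp only []
        nlinarith
      have h8 : 0 ≤ γ i * γ i := mul_self_nonneg _
      linarith
    calc ∑ i, ∫ ω, (η i ω - γ i) * (η i ω - γ i) ∂μ
        ≤ ∑ i, δ * δ * ∫ ω, (g i (X i ω)) ^ 2 ∂μ := Finset.sum_le_sum fun i _ => h3 i
      _ = δ * δ := by rw [← Finset.mul_sum, hvar, mul_one]
  -- doubling step
  have hintBB : Integrable (fun ω => (Bh ω - βc) * (Bh ω - βc)) μ := by
    have h1 : (fun ω => (Bh ω - βc) * (Bh ω - βc))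
        = fun ω => ∑ i, ∑ j, (η i ω - γ i) * (η j ω - γ j) := by
      funext ω
      rw [show (Bh ω - βc) = ∑ i, (η i ω - γ i) from by rw [Finset.sum_sub_distrib]]
      exact Finset.sum_mul_sum _ _ _ _
    rw [h1]
    refine integrable_finset_sum _ fun i _ => integrable_finset_sum _ fun j _ => ?_
    by_cases h : i = j
    · subst h; exact hζ2int i
    · exact (hζind i j h).integrable_mul (hζint i) (hζint j)
  have hintpos : Integrable (fun ω => max (1 - 2 * Bh ω) 0) μ := by
    refine Integrable.mono' (integrable_const 1)
      ((measurable_const.sub (hmeasBh.const_mul 2)).max measurable_const).aestronglyMeasurable ?_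
    filter_upwards with ω
    rw [Real.norm_eq_abs, abs_of_nonneg (le_max_right _ _)]
    exact max_le (by linarith [hBhnn ω]) zero_le_one
  have hintind : Integrable ind μ := by
    refine Integrable.mono' (integrable_const 1) hmeasind.aestronglyMeasurable ?_
    filter_upwards with ω
    rw [Real.norm_eq_abs, abs_of_nonneg (hindnn ω)]
    exact hindle ω
  have hdbl : (μ E).toReal ≤ 2 * ∫ ω, Bh ω * ind ω ∂μ + ∫ ω, max (1 - 2 * Bh ω) 0 ∂μ := by
    have h0 : (μ E).toReal = ∫ ω, ind ω ∂μ := (integral_indicator_one hmeasE).symm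
    rw [h0]
    have hpt : ∀ ω, ind ω ≤ 2 * (Bh ω * ind ω) + max (1 - 2 * Bh ω) 0 := by
      intro ω
      rcases hind01 ω with h | h <;> rw [h]
      · have h1 := le_max_left (1 - 2 * Bh ω) 0
        linarith
      · have h1 := le_max_right (1 - 2 * Bh ω) 0
        linarith
    have hAint : Integrable (fun ω => 2 * (Bh ω * ind ω) + max (1 - 2 * Bh ω) 0) μ :=
      (hBhind.const_mul 2).add hintpos
    calc ∫ ω, ind ω ∂μ ≤ ∫ ω, (2 * (Bh ω * ind ω) + max (1 - 2 * Bh ω) 0) ∂μ :=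
          integral_mono hintind hAint hpt
      _ = 2 * ∫ ω, Bh ω * ind ω ∂μ + ∫ ω, max (1 - 2 * Bh ω) 0 ∂μ := by
          rw [integral_add (hBhind.const_mul 2) hintpos, integral_const_mul]
  -- the correction term is at most δ
  have hH : ∫ ω, max (1 - 2 * Bh ω) 0 ∂μ ≤ δ := by
    have hpt : ∀ ω, max (1 - 2 * Bh ω) 0
        ≤ ((Bh ω - βc) * (Bh ω - βc) + δ * δ + (βc - Bh ω) * (2 * δ)) / (2 * δ) := by
      intro ω
      rw [le_div_iff₀ (by linarith : (0:ℝ) < 2 * δ)]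
      rcases le_total (1 - 2 * Bh ω) 0 with h | h
      · rw [max_eq_right h]
        nlinarith [sq_nonneg (Bh ω - βc - δ)]
      · rw [max_eq_left h]
        nlinarith [sq_nonneg (βc - Bh ω - δ)]
    have hRint : Integrable
        (fun ω => ((Bh ω - βc) * (Bh ω - βc) + δ * δ + (βc - Bh ω) * (2 * δ)) / (2 * δ)) μ := by
      refine Integrable.div_const ?_ _
      exact (hintBB.add (integrable_const _)).add
        (((integrable_const βc).sub hintBh).mul_const (2 * δ))
    calc ∫ ω, max (1 - 2 * Bh ω) 0 ∂μ
        ≤ ∫ ω, ((Bh ω - βc) * (Bh ω - βc) + δ * δ + (βc - Bh ω) * (2 * δ)) / (2 * δ) ∂μ :=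
          integral_mono hintpos hRint hpt
      _ = ((∫ ω, (Bh ω - βc) * (Bh ω - βc) ∂μ) + δ * δ
            + (∫ ω, (βc - Bh ω) ∂μ) * (2 * δ)) / (2 * δ) := by
          have i1 : Integrable (fun ω => (Bh ω - βc) * (Bh ω - βc) + δ * δ) μ :=
            hintBB.add (integrable_const _)
          have i2 : Integrable (fun ω => (βc - Bh ω) * (2 * δ)) μ :=
            ((integrable_const βc).sub hintBh).mul_const (2 * δ)
          have i3 : Integrable (fun ω => βc - Bh ω) μ := (integrable_const βc).sub hintBh
          rw [integral_div]
          congr 1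
          rw [integral_add i1 i2, integral_add hintBB (integrable_const _),
            integral_const, integral_mul_const]
          simp
      _ ≤ (δ * δ + δ * δ + 0) / (2 * δ) := by
          have h1 : ∫ ω, (βc - Bh ω) ∂μ = 0 := by
            rw [integral_sub (integrable_const βc) hintBh, integral_const, hβc]
            simp
          rw [h1, zero_mul]
          gcongr
      _ = δ := by field_simp; ring
  -- final assembly of the core bound
  have hsumrepl : -(∑ i, ∫ ω, g i (X i ω) * f ω (W ω - g i (X i ω)) ∂μ)
      ≤ (∑ i, ∫ ω, |g i (X i ω)| * (|a ω - ai i ω| + |b ω - bi i ω|) ∂μ) / 2 := by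
    have h := Finset.sum_le_sum
      (fun i (_ : i ∈ (Finset.univ : Finset (Fin n))) => by
        linarith [hrepl i] :
        ∀ i ∈ (Finset.univ : Finset (Fin n)),
          -(∫ ω, g i (X i ω) * f ω (W ω - g i (X i ω)) ∂μ)
          ≤ (∫ ω, |g i (X i ω)| * (|a ω - ai i ω| + |b ω - bi i ω|) ∂μ) / 2)
    rw [Finset.sum_neg_distrib] at h
    rw [Finset.sum_div]
    exact h
  have hBind_le : ∫ ω, Bh ω * ind ω ∂μ
      ≤ δ + (∫ ω, |W ω| * |b ω - a ω| ∂μ) / 2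
        + (∑ i, ∫ ω, |g i (X i ω)| * (|a ω - ai i ω| + |b ω - bi i ω|) ∂μ) / 2 := by
    have h1 := hC
    rw [hsum1] at h1
    have h4 : δ * ∫ ω, |W ω| ∂μ ≤ δ * 1 := mul_le_mul_of_nonneg_left habsW hδ.le
    linarith [hE1, hsumrepl]
  linarith [hdbl, hH, hBind_le]


set_option maxHeartbeats 2000000 in
theorem randomized_concentration_inequality {Ω : Type*} [MeasurableSpace Ω] (μ : Measure Ω)
    [IsProbabilityMeasure μ] (n : ℕ) (X : Fin n → Ω → ℝ) (g : Fin n → ℝ → ℝ)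
    (hmeasX : ∀ i, Measurable (X i)) (hmeasg : ∀ i, Measurable (g i))
    (hindep : iIndepFun X μ)
    (hint : ∀ i, Integrable (fun ω => g i (X i ω)) μ)
    (hint2 : ∀ i, Integrable (fun ω => (g i (X i ω)) ^ 2) μ)
    (hmean : ∀ i, ∫ ω, g i (X i ω) ∂μ = 0)
    (hvar : ∑ i, ∫ ω, (g i (X i ω)) ^ 2 ∂μ = 1)
    (W Δ T : Ω → ℝ) (hW : ∀ ω, W ω = ∑ i, g i (X i ω)) (hΔ : Measurable Δ)
    (hT : ∀ ω, T ω = W ω + Δ ω)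
    (Δi : Fin n → Ω → ℝ) (hmeasΔi : ∀ i, Measurable (Δi i))
    (hindepΔi : ∀ i, IndepFun (X i) (fun ω => (Δi i ω, W ω - g i (X i ω))) μ)
    (hintWΔ : Integrable (fun ω => W ω * Δ ω) μ)
    (hintgΔ : ∀ i, Integrable (fun ω => g i (X i ω) * (Δ ω - Δi i ω)) μ)
    (δ : ℝ) (hδ : 0 < δ)
    (hcond : ∑ i, ∫ ω, |g i (X i ω)| * min δ |g i (X i ω)| ∂μ ≥ 1 / 2) :
    ∀ z : ℝ, |(μ {ω | T ω ≤ z}).toReal - (μ {ω | W ω ≤ z}).toReal| ≤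
      4 * δ + ∫ ω, |W ω * Δ ω| ∂μ + ∑ i, ∫ ω, |g i (X i ω) * (Δ ω - Δi i ω)| ∂μ := by
  intro z
  have hmeasξ : ∀ i, Measurable (fun ω => g i (X i ω)) := fun i => (hmeasg i).comp (hmeasX i)
  have hWeq : W = fun ω => ∑ i, g i (X i ω) := funext hW
  have hmeasW : Measurable W := by
    rw [hWeq]; exact Finset.measurable_sum _ (fun i _ => hmeasξ i)
  have hintW : Integrable W μ := by
    rw [hWeq]; exact integrable_finset_sum _ (fun i _ => hint i)
  -- choose the truncation level
  obtain ⟨N, hN⟩ : ∃ N : ℕ, μ {ω | (N : ℝ) < |Δ ω|} ≤ ENNReal.ofReal δ := by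
    have hmeasS : ∀ k : ℕ, MeasurableSet {ω | (k : ℝ) < |Δ ω|} := fun k =>
      measurableSet_lt measurable_const hΔ.abs
    have hanti : Antitone (fun k : ℕ => {ω | (k : ℝ) < |Δ ω|}) := by
      intro k m hkm ω hω
      have : (k : ℝ) ≤ (m : ℝ) := by exact_mod_cast hkm
      exact lt_of_le_of_lt this hω
    have hiempty : (⋂ k : ℕ, {ω | (k : ℝ) < |Δ ω|}) = ∅ := by
      ext ω
      simp only [Set.mem_iInter, Set.mem_setOf_eq, Set.mem_empty_iff_false, iff_false]
      push_neg
      obtain ⟨k, hk⟩ := exists_nat_gt |Δ ω|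
      exact ⟨k, hk.le⟩
    have htend := MeasureTheory.tendsto_measure_iInter_atTop (μ := μ)
      (fun k => (hmeasS k).nullMeasurableSet) hanti ⟨0, measure_ne_top μ _⟩
    rw [hiempty, measure_empty] at htend
    rw [ENNReal.tendsto_atTop_zero] at htend
    obtain ⟨N, hN'⟩ := htend (ENNReal.ofReal δ) (by simp [ENNReal.ofReal_pos, hδ])
    exact ⟨N, hN' N le_rfl⟩
  set M : ℝ := (N : ℝ) with hMdef
  have hM0 : (0 : ℝ) ≤ M := Nat.cast_nonneg N
  have hSΔ : (μ {ω | M < |Δ ω|}).toReal ≤ δ := ENNReal.toReal_le_of_le_ofReal hδ.le hN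
  -- truncated perturbations
  set Δc : Ω → ℝ := fun ω => clipR (-M) M (Δ ω) with hΔcdef
  set Δci : Fin n → Ω → ℝ := fun i ω => clipR (-M) M (Δi i ω) with hΔcidef
  have hmeasΔc : Measurable Δc := (hΔ.max measurable_const).min measurable_const
  have hmeasΔci : ∀ i, Measurable (Δci i) :=
    fun i => ((hmeasΔi i).max measurable_const).min measurable_const
  have hΔcM : ∀ ω, |Δc ω| ≤ M := fun ω => clipR_sym_abs_le hM0
  have hΔciM : ∀ i ω, |Δci i ω| ≤ M := fun i ω => clipR_sym_abs_le hM0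
  have hΔcle : ∀ ω, |Δc ω| ≤ |Δ ω| := fun ω => clipR_sym_abs_le_self hM0
  have hΔclip : ∀ i ω, |Δc ω - Δci i ω| ≤ |Δ ω - Δi i ω| :=
    fun i ω => clipR_lip (-M) M _ _
  have hΔeq : ∀ ω, |Δ ω| ≤ M → Δc ω = Δ ω := fun ω h => clipR_sym_eq h
  -- the K bound for the core lemma
  set K : ℝ := |z| + M with hKdef
  -- bounds used to compare integrals with the statement's remainder terms
  have hWba : ∀ (c : Ω → ℝ), Measurable c → (∀ ω, |c ω| ≤ |Δ ω|) → (∀ ω, |c ω| ≤ M) →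
      Integrable (fun ω => |W ω| * |c ω|) μ ∧
        ∫ ω, |W ω| * |c ω| ∂μ ≤ ∫ ω, |W ω * Δ ω| ∂μ := by
    intro c hc hcle hcM
    have hintc : Integrable (fun ω => |W ω| * |c ω|) μ := by
      refine Integrable.mono' ((hintW.abs).const_mul M)
        (hmeasW.abs.mul hc.abs).aestronglyMeasurable ?_
      filter_upwards with ω
      rw [Real.norm_eq_abs, abs_of_nonneg (mul_nonneg (abs_nonneg _) (abs_nonneg _))]
      calc |W ω| * |c ω| ≤ |W ω| * M := mul_le_mul_of_nonneg_left (hcM ω) (abs_nonneg _)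
        _ = M * |W ω| := by ring
    refine ⟨hintc, ?_⟩
    refine integral_mono hintc hintWΔ.abs ?_
    intro ω
    calc |W ω| * |c ω| ≤ |W ω| * |Δ ω| := mul_le_mul_of_nonneg_left (hcle ω) (abs_nonneg _)
      _ = |W ω * Δ ω| := (abs_mul _ _).symm
  -- absolute-value bounds needed for K
  have habsz : ∀ x : ℝ, |x| ≤ M → |z - x| ≤ K := by
    intro x hx
    rw [hKdef, sub_eq_add_neg]
    refine le_trans (abs_add_le _ _) ?_
    rw [abs_neg]
    linarith [abs_le.mp hx]
  have hKz : |z| ≤ K := by rw [hKdef]; linarith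
  -- the measurable map used for the independence composition, direction 1
  have hψ1 : Measurable (fun p : ℝ × ℝ => (z, z - clipR (-M) M p.1, p.2)) := by
    refine measurable_const.prodMk (Measurable.prodMk ?_ measurable_snd)
    exact measurable_const.sub ((measurable_fst.max measurable_const).min measurable_const)
  have hψ2 : Measurable (fun p : ℝ × ℝ => (z - clipR (-M) M p.1, z, p.2)) := by
    refine Measurable.prodMk ?_ (measurable_const.prodMk measurable_snd)
    exact measurable_const.sub ((measurable_fst.max measurable_const).min measurable_const)
  -- direction 1 : P(T ≤ z) - P(W ≤ z)
  have hind2a : ∀ i, IndepFun (fun ω => g i (X i ω))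
      (fun ω => ((fun (_ : Ω) => z) ω, (fun ω => z - Δci i ω) ω,
        W ω - g i (X i ω))) μ := by
    intro i
    have h := (hindepΔi i).comp (hmeasg i) hψ1
    exact h
  have hcore1 := core_concentration μ n X g hmeasX hmeasg hindep hint hint2 hmean hvar W hW
      δ hδ hcond (fun _ => z) (fun ω => z - Δc ω) measurable_const
      (measurable_const.sub hmeasΔc)
      (fun _ _ => z) (fun i ω => z - Δci i ω) (fun i => measurable_const)
      (fun i => measurable_const.sub (hmeasΔci i)) K
      (fun ω => hKz) (fun ω => habsz _ (hΔcM ω))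
      (fun i ω => hKz) (fun i ω => habsz _ (hΔciM i ω)) hind2a
  have hcore1' : (μ {ω | z ≤ W ω ∧ W ω ≤ z - Δc ω}).toReal ≤
      3 * δ + ∫ ω, |W ω| * |z - Δc ω - z| ∂μ
        + ∑ i, ∫ ω, |g i (X i ω)| * (|z - z| + |z - Δc ω - (z - Δci i ω)|) ∂μ := hcore1
  have hI1 : ∫ ω, |W ω| * |z - Δc ω - z| ∂μ ≤ ∫ ω, |W ω * Δ ω| ∂μ := by
    have he : (fun ω => |W ω| * |z - Δc ω - z|) = fun ω => |W ω| * |Δc ω| := by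
      funext ω
      rw [show z - Δc ω - z = -Δc ω from by ring, abs_neg]
    rw [he]
    exact (hWba Δc hmeasΔc hΔcle hΔcM).2
  have hI2 : ∀ i, ∫ ω, |g i (X i ω)| * (|z - z| + |z - Δc ω - (z - Δci i ω)|) ∂μ
      ≤ ∫ ω, |g i (X i ω) * (Δ ω - Δi i ω)| ∂μ := by
    intro i
    have hptw : ∀ ω, |g i (X i ω)| * (|z - z| + |z - Δc ω - (z - Δci i ω)|)
        ≤ |g i (X i ω) * (Δ ω - Δi i ω)| := by
      intro ω
      have h1 : |z - Δc ω - (z - Δci i ω)| = |Δc ω - Δci i ω| := by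
        rw [show z - Δc ω - (z - Δci i ω) = -(Δc ω - Δci i ω) from by ring, abs_neg]
      rw [abs_mul, sub_self, abs_zero, zero_add, h1]
      exact mul_le_mul_of_nonneg_left (le_trans (hΔclip i ω) le_rfl) (abs_nonneg _)
    have hintL : Integrable
        (fun ω => |g i (X i ω)| * (|z - z| + |z - Δc ω - (z - Δci i ω)|)) μ := by
      have hmeasL : Measurable
          (fun ω => |g i (X i ω)| * (|z - z| + |z - Δc ω - (z - Δci i ω)|)) :=
        ((hmeasξ i).abs).mul (measurable_const.add
          (((measurable_const.sub hmeasΔc).sub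
            (measurable_const.sub (hmeasΔci i))).abs))
      refine Integrable.mono' (((hint i).abs).const_mul (2 * M))
        hmeasL.aestronglyMeasurable ?_
      filter_upwards with ω
      have h1 : |z - Δc ω - (z - Δci i ω)| = |Δc ω - Δci i ω| := by
        rw [show z - Δc ω - (z - Δci i ω) = -(Δc ω - Δci i ω) from by ring, abs_neg]
      have h2 : |Δc ω - Δci i ω| ≤ 2 * M := by
        refine le_trans (abs_sub _ _) ?_
        linarith [hΔcM ω, hΔciM i ω]
      have h3 : (0:ℝ) ≤ |z - z| + |z - Δc ω - (z - Δci i ω)| :=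
        add_nonneg (abs_nonneg _) (abs_nonneg _)
      rw [Real.norm_eq_abs, abs_of_nonneg (mul_nonneg (abs_nonneg _) h3)]
      rw [sub_self, abs_zero, zero_add, h1]
      calc |g i (X i ω)| * |Δc ω - Δci i ω| ≤ |g i (X i ω)| * (2 * M) :=
            mul_le_mul_of_nonneg_left h2 (abs_nonneg _)
        _ = 2 * M * |g i (X i ω)| := by ring
    exact integral_mono hintL (hintgΔ i).abs hptw
  have hfin : ∀ s : Set Ω, μ s ≠ ⊤ := fun s => measure_ne_top μ s
  have hsub1 : {ω | T ω ≤ z} ⊆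
      ({ω | W ω ≤ z} ∪ {ω | z ≤ W ω ∧ W ω ≤ z - Δc ω}) ∪ {ω | M < |Δ ω|} := by
    intro ω hω
    simp only [Set.mem_setOf_eq, Set.mem_union] at *
    by_cases h1 : W ω ≤ z
    · exact Or.inl (Or.inl h1)
    · push_neg at h1
      by_cases h2 : |Δ ω| ≤ M
      · refine Or.inl (Or.inr ⟨h1.le, ?_⟩)
        rw [hΔeq ω h2]
        have h3 := hT ω
        rw [h3] at hω
        linarith
      · push_neg at h2; exact Or.inr h2
  have hm1 : (μ {ω | T ω ≤ z}).toReal ≤ (μ {ω | W ω ≤ z}).toReal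
      + (μ {ω | z ≤ W ω ∧ W ω ≤ z - Δc ω}).toReal + (μ {ω | M < |Δ ω|}).toReal := by
    have h1 : μ {ω | T ω ≤ z} ≤ (μ {ω | W ω ≤ z} + μ {ω | z ≤ W ω ∧ W ω ≤ z - Δc ω})
        + μ {ω | M < |Δ ω|} := by
      refine le_trans (measure_mono hsub1) ?_
      refine le_trans (measure_union_le _ _) ?_
      gcongr
      exact measure_union_le _ _
    have h2 := ENNReal.toReal_mono
      (ENNReal.add_ne_top.mpr ⟨ENNReal.add_ne_top.mpr ⟨hfin _, hfin _⟩, hfin _⟩) h1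
    rwa [ENNReal.toReal_add (ENNReal.add_ne_top.mpr ⟨hfin _, hfin _⟩) (hfin _),
      ENNReal.toReal_add (hfin _) (hfin _)] at h2
  have hdir1 : (μ {ω | T ω ≤ z}).toReal - (μ {ω | W ω ≤ z}).toReal ≤
      4 * δ + ∫ ω, |W ω * Δ ω| ∂μ + ∑ i, ∫ ω, |g i (X i ω) * (Δ ω - Δi i ω)| ∂μ := by
    have hsum := Finset.sum_le_sum (fun i (_ : i ∈ (Finset.univ : Finset (Fin n))) => hI2 i)
    linarith [hm1, hcore1', hI1, hSΔ, hsum]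
  -- direction 2 : P(W ≤ z) - P(T ≤ z)
  have hind2b : ∀ i, IndepFun (fun ω => g i (X i ω))
      (fun ω => ((fun ω => z - Δci i ω) ω, (fun (_ : Ω) => z) ω,
        W ω - g i (X i ω))) μ := by
    intro i
    have h := (hindepΔi i).comp (hmeasg i) hψ2
    exact h
  have hcore2 := core_concentration μ n X g hmeasX hmeasg hindep hint hint2 hmean hvar W hW
      δ hδ hcond (fun ω => z - Δc ω) (fun _ => z) (measurable_const.sub hmeasΔc)
      measurable_const
      (fun i ω => z - Δci i ω) (fun _ _ => z) (fun i => measurable_const.sub (hmeasΔci i))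
      (fun i => measurable_const) K
      (fun ω => habsz _ (hΔcM ω)) (fun ω => hKz)
      (fun i ω => habsz _ (hΔciM i ω)) (fun i ω => hKz) hind2b
  have hcore2' : (μ {ω | z - Δc ω ≤ W ω ∧ W ω ≤ z}).toReal ≤
      3 * δ + ∫ ω, |W ω| * |z - (z - Δc ω)| ∂μ
        + ∑ i, ∫ ω, |g i (X i ω)| * (|z - Δc ω - (z - Δci i ω)| + |z - z|) ∂μ := hcore2
  have hJ1 : ∫ ω, |W ω| * |z - (z - Δc ω)| ∂μ ≤ ∫ ω, |W ω * Δ ω| ∂μ := by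
    have he : (fun ω => |W ω| * |z - (z - Δc ω)|) = fun ω => |W ω| * |Δc ω| := by
      funext ω
      rw [show z - (z - Δc ω) = Δc ω from by ring]
    rw [he]
    exact (hWba Δc hmeasΔc hΔcle hΔcM).2
  have hJ2 : ∀ i, ∫ ω, |g i (X i ω)| * (|z - Δc ω - (z - Δci i ω)| + |z - z|) ∂μ
      ≤ ∫ ω, |g i (X i ω) * (Δ ω - Δi i ω)| ∂μ := by
    intro i
    have h1 : ∀ ω, |z - Δc ω - (z - Δci i ω)| = |Δc ω - Δci i ω| := by
      intro ω
      rw [show z - Δc ω - (z - Δci i ω) = -(Δc ω - Δci i ω) from by ring, abs_neg]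
    have hptw : ∀ ω, |g i (X i ω)| * (|z - Δc ω - (z - Δci i ω)| + |z - z|)
        ≤ |g i (X i ω) * (Δ ω - Δi i ω)| := by
      intro ω
      rw [abs_mul, sub_self, abs_zero, add_zero, h1 ω]
      exact mul_le_mul_of_nonneg_left (hΔclip i ω) (abs_nonneg _)
    have hintL : Integrable
        (fun ω => |g i (X i ω)| * (|z - Δc ω - (z - Δci i ω)| + |z - z|)) μ := by
      have hmeasL : Measurable
          (fun ω => |g i (X i ω)| * (|z - Δc ω - (z - Δci i ω)| + |z - z|)) :=
        ((hmeasξ i).abs).mul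
          ((((measurable_const.sub hmeasΔc).sub
            (measurable_const.sub (hmeasΔci i))).abs).add measurable_const)
      refine Integrable.mono' (((hint i).abs).const_mul (2 * M))
        hmeasL.aestronglyMeasurable ?_
      filter_upwards with ω
      have h2 : |Δc ω - Δci i ω| ≤ 2 * M := by
        refine le_trans (abs_sub _ _) ?_
        linarith [hΔcM ω, hΔciM i ω]
      have h3 : (0:ℝ) ≤ |z - Δc ω - (z - Δci i ω)| + |z - z| :=
        add_nonneg (abs_nonneg _) (abs_nonneg _)
      rw [Real.norm_eq_abs, abs_of_nonneg (mul_nonneg (abs_nonneg _) h3)]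
      rw [sub_self, abs_zero, add_zero, h1 ω]
      calc |g i (X i ω)| * |Δc ω - Δci i ω| ≤ |g i (X i ω)| * (2 * M) :=
            mul_le_mul_of_nonneg_left h2 (abs_nonneg _)
        _ = 2 * M * |g i (X i ω)| := by ring
    exact integral_mono hintL (hintgΔ i).abs hptw
  have hsub2 : {ω | W ω ≤ z} ⊆
      ({ω | T ω ≤ z} ∪ {ω | z - Δc ω ≤ W ω ∧ W ω ≤ z}) ∪ {ω | M < |Δ ω|} := by
    intro ω hω
    simp only [Set.mem_setOf_eq, Set.mem_union] at *
    by_cases h1 : T ω ≤ z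
    · exact Or.inl (Or.inl h1)
    · push_neg at h1
      by_cases h2 : |Δ ω| ≤ M
      · refine Or.inl (Or.inr ⟨?_, hω⟩)
        rw [hΔeq ω h2]
        have h3 := hT ω
        rw [h3] at h1
        linarith
      · push_neg at h2; exact Or.inr h2
  have hm2 : (μ {ω | W ω ≤ z}).toReal ≤ (μ {ω | T ω ≤ z}).toReal
      + (μ {ω | z - Δc ω ≤ W ω ∧ W ω ≤ z}).toReal + (μ {ω | M < |Δ ω|}).toReal := by
    have h1 : μ {ω | W ω ≤ z} ≤ (μ {ω | T ω ≤ z} + μ {ω | z - Δc ω ≤ W ω ∧ W ω ≤ z})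
        + μ {ω | M < |Δ ω|} := by
      refine le_trans (measure_mono hsub2) ?_
      refine le_trans (measure_union_le _ _) ?_
      gcongr
      exact measure_union_le _ _
    have h2 := ENNReal.toReal_mono
      (ENNReal.add_ne_top.mpr ⟨ENNReal.add_ne_top.mpr ⟨hfin _, hfin _⟩, hfin _⟩) h1
    rwa [ENNReal.toReal_add (ENNReal.add_ne_top.mpr ⟨hfin _, hfin _⟩) (hfin _),
      ENNReal.toReal_add (hfin _) (hfin _)] at h2
  have hdir2 : (μ {ω | W ω ≤ z}).toReal - (μ {ω | T ω ≤ z}).toReal ≤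
      4 * δ + ∫ ω, |W ω * Δ ω| ∂μ + ∑ i, ∫ ω, |g i (X i ω) * (Δ ω - Δi i ω)| ∂μ := by
    have hsum := Finset.sum_le_sum (fun i (_ : i ∈ (Finset.univ : Finset (Fin n))) => hJ2 i)
    linarith [hm2, hcore2', hJ1, hSΔ, hsum]
  rw [abs_sub_le_iff]
  exact ⟨hdir1, hdir2⟩

end
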